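/- Suppose R s a ≥ 0 for all s, a; for each state s there exists an action a with c s a ≤ b; and there exists a state s₀ such that max_{a ∈ A} R s₀ a > max_{a : c s₀ a ≤ b} R s₀ a and max_{a : c s₀ a ≤ b} R s₀ a > 0. Let π* be a policy maximizing J(R, ·) over all policies, and let π_c be a feasible policy maximizing J(R, ·) over all feasible policies. Then J(R_c, π*) < J(R_c, π_c), where R_c s a = R s a if c s a ≤ b and R_c s a = 0 otherwise. -/
import Mathlib


open Finset
open scoped Classical

/-- A (stochastic) policy on states `S` and actions `A`: nonnegative and sums to 1 in each state. -/
def IsPolicy {S A : Type*} [Fintype A] (π : S → A → ℝ) : Prop :=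
  (∀ s a, 0 ≤ π s a) ∧ ∀ s, ∑ a, π s a = 1

/-- The value of a policy `π` under reward function `R`. -/
noncomputable def J {S A : Type*} [Fintype S] [Fintype A]
    (R : S → A → ℝ) (π : S → A → ℝ) : ℝ :=
  ∑ s, ∑ a, π s a * R s a

/-- A policy is feasible if it only puts positive probability on actions with cost at most `b`. -/
def Feasible {S A : Type*} (c : S → A → ℝ) (b : ℝ) (π : S → A → ℝ) : Prop :=
  ∀ s a, 0 < π s a → c s a ≤ b

/-- under nonnegative rewards, feasibility of every state, and a state
`s₀` where the unconstrained max strictly exceeds the (positive) constrained max, the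
unconstrained optimum `π*` is strictly worse than the constrained optimum `π_c`
under the constrained reward `R_c`. -/
theorem unconstrained_optimum_strictly_worse_constrained_reward
    {S A : Type*} [Fintype S] [Fintype A] [Nonempty S] [Nonempty A]
    (R c : S → A → ℝ) (b : ℝ)
    (hR : ∀ s a, 0 ≤ R s a)
    (hfeas : ∀ s, ∃ a, c s a ≤ b)
    (s₀ : S)
    (hgap : (Finset.univ.filter (fun a => c s₀ a ≤ b)).sup'
        (by obtain ⟨a, ha⟩ := hfeas s₀
            exact ⟨a, by simpa using ha⟩) (R s₀)
      < Finset.univ.sup' Finset.univ_nonempty (R s₀))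
    (hpos : 0 < (Finset.univ.filter (fun a => c s₀ a ≤ b)).sup'
        (by obtain ⟨a, ha⟩ := hfeas s₀
            exact ⟨a, by simpa using ha⟩) (R s₀))
    (πstar : S → A → ℝ)
    (hπstar : IsPolicy πstar)
    (hoptstar : ∀ π : S → A → ℝ, IsPolicy π → J R π ≤ J R πstar)
    (πc : S → A → ℝ)
    (hπc : IsPolicy πc) (hπcFeas : Feasible c b πc)
    (hoptc : ∀ π : S → A → ℝ, IsPolicy π → Feasible c b π → J R π ≤ J R πc) :
    J (fun s a => if c s a ≤ b then R s a else 0) πstar <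
      J (fun s a => if c s a ≤ b then R s a else 0) πc := by
  classical
  have hne : ∀ s : S, (Finset.univ.filter (fun a => c s a ≤ b)).Nonempty := by
    intro s; obtain ⟨a, ha⟩ := hfeas s; exact ⟨a, by simpa using ha⟩
  set Rc : S → A → ℝ := fun s a => if c s a ≤ b then R s a else 0 with hRc
  set Mc : S → ℝ := fun s => (Finset.univ.filter (fun a => c s a ≤ b)).sup' (hne s) (R s)
    with hMcdef
  set M : S → ℝ := fun s => Finset.univ.sup' Finset.univ_nonempty (R s) with hMdef
  have hgap' : Mc s₀ < M s₀ := hgap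
  have hpos' : 0 < Mc s₀ := hpos
  -- choose feasible argmax actions
  have hchoice : ∀ s : S, ∃ a ∈ Finset.univ.filter (fun a => c s a ≤ b), Mc s = R s a :=
    fun s => Finset.exists_mem_eq_sup' (hne s) (R s)
  choose ad had hadeq using hchoice
  have hadc : ∀ s, c s (ad s) ≤ b := fun s => (Finset.mem_filter.mp (had s)).2
  have hMcnonneg : ∀ s, 0 ≤ Mc s := fun s => (hadeq s) ▸ hR s (ad s)
  -- Rc bounded by Mc
  have hRcle : ∀ s a, Rc s a ≤ Mc s := by
    intro s a
    by_cases h : c s a ≤ b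
    · simp only [hRc, if_pos h]
      exact Finset.le_sup' (R s) (Finset.mem_filter.mpr ⟨Finset.mem_univ a, h⟩)
    · simp only [hRc, if_neg h]; exact hMcnonneg s
  -- deterministic feasible argmax policy
  set πd : S → A → ℝ := fun s a => if a = ad s then 1 else 0 with hπddef
  have hπdpol : IsPolicy πd := by
    constructor
    · intro s a; simp only [hπddef]; split <;> norm_num
    · intro s; simp [hπddef]
  have hπdfeas : Feasible c b πd := by
    intro s a h
    simp only [hπddef] at h
    split at h
    · subst ‹a = ad s›; exact hadc s
    · norm_num at h
  have hJd : J R πd = ∑ s, Mc s := by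
    unfold J
    refine Finset.sum_congr rfl (fun s _ => ?_)
    rw [hadeq s]
    simp [hπddef]
  -- on feasible policies Rc-value = R-value
  have hfeq : ∀ π : S → A → ℝ, IsPolicy π → Feasible c b π → J Rc π = J R π := by
    intro π hπ hf
    unfold J
    refine Finset.sum_congr rfl fun s _ => Finset.sum_congr rfl fun a _ => ?_
    rcases lt_or_eq_of_le (hπ.1 s a) with h | h
    · simp only [hRc, if_pos (hf s a h)]
    · rw [← h]; ring
  have hc1 : ∑ s, Mc s ≤ J Rc πc := by
    rw [hfeq πc hπc hπcFeas, ← hJd]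
    exact hoptc πd hπdpol hπdfeas
  -- πstar concentrates on unconstrained argmax at s₀
  obtain ⟨astar, -, hastar⟩ := Finset.exists_mem_eq_sup' (Finset.univ_nonempty (α := A)) (R s₀)
  have hastar' : M s₀ = R s₀ astar := hastar
  set π' : S → A → ℝ := fun s a => if s = s₀ then (if a = astar then 1 else 0) else πstar s a
    with hπ'def
  have hπ'pol : IsPolicy π' := by
    constructor
    · intro s a; simp only [hπ'def]; split
      · split <;> norm_num
      · exact hπstar.1 s a
    · intro s; by_cases h : s = s₀ <;> simp [hπ'def, h, hπstar.2 s]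
  have hinner : M s₀ ≤ ∑ a, πstar s₀ a * R s₀ a := by
    have hle := hoptstar π' hπ'pol
    unfold J at hle
    rw [← Finset.sum_erase_add _ _ (Finset.mem_univ s₀),
        ← Finset.sum_erase_add _ _ (Finset.mem_univ s₀)] at hle
    have heq : ∑ s ∈ Finset.univ.erase s₀, ∑ a, π' s a * R s a
        = ∑ s ∈ Finset.univ.erase s₀, ∑ a, πstar s a * R s a := by
      refine Finset.sum_congr rfl fun s hs => ?_
      have hs' : s ≠ s₀ := (Finset.mem_erase.mp hs).1
      simp [hπ'def, hs']
    rw [heq] at hle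
    have h2 : ∑ a, π' s₀ a * R s₀ a = M s₀ := by
      simp [hπ'def, hastar']
    rw [h2] at hle
    linarith
  have hub : ∀ s, ∑ a, πstar s a * R s a ≤ M s := by
    intro s
    calc ∑ a, πstar s a * R s a ≤ ∑ a, πstar s a * M s := by
          refine Finset.sum_le_sum fun a _ => ?_
          exact mul_le_mul_of_nonneg_left
            (Finset.le_sup' (R s) (Finset.mem_univ a)) (hπstar.1 s a)
      _ = M s := by rw [← Finset.sum_mul, hπstar.2 s, one_mul]
  have hinnereq : ∑ a, πstar s₀ a * R s₀ a = M s₀ := le_antisymm (hub s₀) hinner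
  -- each positive-weight action at s₀ achieves M s₀
  have hconc : ∀ a, 0 < πstar s₀ a → R s₀ a = M s₀ := by
    intro a ha
    by_contra hne'
    have hlt : R s₀ a < M s₀ :=
      lt_of_le_of_ne (Finset.le_sup' (R s₀) (Finset.mem_univ a)) hne'
    have : ∑ a, πstar s₀ a * R s₀ a < ∑ a, πstar s₀ a * M s₀ := by
      refine Finset.sum_lt_sum (fun i _ => mul_le_mul_of_nonneg_left
        (Finset.le_sup' (R s₀) (Finset.mem_univ i)) (hπstar.1 s₀ i))
        ⟨a, Finset.mem_univ a, by exact mul_lt_mul_of_pos_left hlt ha⟩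
    rw [← Finset.sum_mul, hπstar.2 s₀, one_mul] at this
    linarith [hinnereq]
  -- at s₀, πstar collects zero constrained reward
  have hzero : ∑ a, πstar s₀ a * Rc s₀ a = 0 := by
    refine Finset.sum_eq_zero fun a _ => ?_
    rcases lt_or_eq_of_le (hπstar.1 s₀ a) with h | h
    · have hRa := hconc a h
      have : ¬ c s₀ a ≤ b := by
        intro hc
        have : R s₀ a ≤ Mc s₀ :=
          Finset.le_sup' (R s₀) (Finset.mem_filter.mpr ⟨Finset.mem_univ a, hc⟩)
        rw [hRa] at this
        linarith
      simp [hRc, this]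
    · rw [← h, zero_mul]
  -- strict bound for πstar
  have hstar : J Rc πstar < ∑ s, Mc s := by
    unfold J
    refine Finset.sum_lt_sum (fun s _ => ?_) ⟨s₀, Finset.mem_univ s₀, ?_⟩
    · calc ∑ a, πstar s a * Rc s a ≤ ∑ a, πstar s a * Mc s :=
            Finset.sum_le_sum fun a _ =>
              mul_le_mul_of_nonneg_left (hRcle s a) (hπstar.1 s a)
        _ = Mc s := by rw [← Finset.sum_mul, hπstar.2 s, one_mul]
    · rw [hzero]; exact hpos'
  exact lt_of_lt_of_le hstar hc1
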